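/- Let n ≥ 1 and let T be a tree (a connected acyclic simple graph) on the vertex set {0,1,…,n}, regarded as rooted at 0, so that every vertex i ∈ {1,…,n} has a unique parent par(i), namely the neighbor of i on the unique path in T from i to 0. Then there exists a unique bijection p : {0,1,…,n} → {0,1,…,n} such that: (a) p(par(i)) < p(i) for every i ∈ {1,…,n} (in particular p(0) = 0); (b) whenever i, j ∈ {1,…,n} satisfy par(i) = par(j) and i < j, then p(i) > p(j); and (c) there is no pair i, j ∈ {1,…,n} with p(par(i)) < p(par(j)) < p(i) < p(j). (Condition (c) says that the planar arc diagram obtained by placing the vertices at positions p(v) on a line and joining each i to par(i) by an upper semicircular arc is non-crossing.) -/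

import Mathlib

namespace Stmt7Aux

open List

variable {α : Type*}

/-- Transitivity of list lex. -/
theorem lex_trans {r : α → α → Prop} (htr : ∀ a b c, r a b → r b c → r a c) :
    ∀ {l₁ l₂ l₃ : List α}, Lex r l₁ l₂ → Lex r l₂ l₃ → Lex r l₁ l₃
  | _, _, _, .nil, .cons _ => .nil
  | _, _, _, .nil, .rel _ => .nil
  | _, _, _, .cons h₁, .cons h₂ => .cons (lex_trans htr h₁ h₂)
  | _, _, _, .cons _, .rel h₂ => .rel h₂
  | _, _, _, .rel h₁, .cons _ => .rel h₁
  | _, _, _, .rel h₁, .rel h₂ => .rel (htr _ _ _ h₁ h₂)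

/-- Decomposition of a lex inequality: proper-prefix case or first-divergence case. -/
theorem lex_decomp {r : α → α → Prop} {l m : List α} (h : Lex r l m) :
    (∃ t, t ≠ [] ∧ m = l ++ t) ∨
      ∃ pre a s b t, l = pre ++ a :: s ∧ m = pre ++ b :: t ∧ r a b := by
  induction h with
  | nil => exact Or.inl ⟨_, by simp, rfl⟩
  | @rel a l₁ b l₂ hr => exact Or.inr ⟨[], a, l₁, b, l₂, rfl, rfl, hr⟩
  | @cons a l₁ l₂ h ih =>
      rcases ih with ⟨t, ht, rfl⟩ | ⟨pre, x, s, y, t, rfl, rfl, hr⟩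
      · exact Or.inl ⟨t, ht, rfl⟩
      · exact Or.inr ⟨a :: pre, x, s, y, t, rfl, rfl, hr⟩

/-- Inversion at a common prefix. -/
theorem lex_middle {r : α → α → Prop} (hirr : ∀ a, ¬ r a a) :
    ∀ (pre : List α) {a s b t}, Lex r (pre ++ a :: s) (pre ++ b :: t) →
      r a b ∨ (a = b ∧ Lex r s t)
  | [], a, s, b, t, h => by
      cases h with
      | cons h => exact Or.inr ⟨rfl, h⟩
      | rel h => exact Or.inl h
  | c :: pre, a, s, b, t, h => by
      cases h with
      | cons h => exact lex_middle hirr pre h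
      | rel h => exact absurd h (hirr c)

theorem lex_sandwich {r : α → α → Prop} (hirr : ∀ a, ¬ r a a)
    (hasym : ∀ a b, r a b → ¬ r b a) {l m : List α} {x : α}
    (h1 : Lex r l m) (h2 : Lex r m (l ++ [x])) : ∃ t, t ≠ [] ∧ m = l ++ t := by
  rcases lex_decomp h1 with h | ⟨pre, a, s, b, t, rfl, rfl, hr⟩
  · exact h
  · have h2' : Lex r (pre ++ b :: t) (pre ++ a :: (s ++ [x])) := by
      simpa using h2
    rcases lex_middle hirr pre h2' with hba | ⟨rfl, _⟩
    · exact absurd hr (hasym _ _ hba)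
    · exact absurd hr (hirr _)

variable {N : ℕ}

/-- The path from the root `0` to `v` (inclusive). -/
def path (par : Fin (N + 1) → Fin (N + 1)) (d : Fin (N + 1) → ℕ)
    (hd : ∀ i, i ≠ 0 → d (par i) < d i) (v : Fin (N + 1)) : List (Fin (N + 1)) :=
  if h : v = 0 then [0] else path par d hd (par v) ++ [v]
termination_by d v
decreasing_by exact hd v h

variable {par : Fin (N + 1) → Fin (N + 1)} {d : Fin (N + 1) → ℕ}
  (hd : ∀ i, i ≠ 0 → d (par i) < d i)

theorem path_zero : path par d hd 0 = [0] := by rw [path]; simp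

theorem path_ne {v : Fin (N + 1)} (h : v ≠ 0) :
    path par d hd v = path par d hd (par v) ++ [v] := by
  rw [path]; simp [h]

theorem path_ne_nil (v : Fin (N + 1)) : path par d hd v ≠ [] := by
  by_cases h : v = 0
  · subst h; rw [path_zero]; simp
  · rw [path_ne hd h]; simp

theorem path_getLast? (v : Fin (N + 1)) : (path par d hd v).getLast? = some v := by
  by_cases h : v = 0
  · subst h; rw [path_zero]; rfl
  · rw [path_ne hd h]; simp

theorem path_inj {u v : Fin (N + 1)} (h : path par d hd u = path par d hd v) : u = v := by
  have h1 := path_getLast? hd u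
  rw [h, path_getLast? hd v] at h1
  exact (Option.some_injective _ h1).symm

theorem path_head? (v : Fin (N + 1)) : (path par d hd v).head? = some 0 := by
  by_cases h : v = 0
  · subst h; rw [path_zero]; rfl
  · rw [path_ne hd h]
    obtain ⟨a, l, e⟩ := List.exists_cons_of_ne_nil (path_ne_nil hd (par v))
    have := path_head? (par v)
    rw [e] at this ⊢
    simpa using this
termination_by d v
decreasing_by exact hd v h

/-- Every (nonempty) prefix of a path is the path of its last element. -/
theorem path_prefix (v : Fin (N + 1)) (l : List (Fin (N + 1))) (x : Fin (N + 1))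
    (t : List (Fin (N + 1))) (h : path par d hd v = l ++ x :: t) :
    path par d hd x = l ++ [x] := by
  by_cases hv : v = 0
  · subst hv
    rw [path_zero] at h
    cases l with
    | nil =>
        simp at h
        obtain ⟨rfl, rfl⟩ := h
        exact path_zero hd
    | cons c l' => simp at h
  · rw [path_ne hd hv] at h
    rcases List.eq_nil_or_concat t with rfl | ⟨t', z, rfl⟩
    · have h2 := List.append_inj' h rfl
      obtain ⟨h3, h4⟩ := h2
      obtain rfl : v = x := by simpa using h4
      rw [path_ne hd hv, h3]
    · have h' : path par d hd (par v) ++ [v] = (l ++ x :: t') ++ [z] := by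
        simpa using h
      have h2 := List.append_inj' h' rfl
      obtain ⟨h3, h4⟩ := h2
      exact path_prefix (par v) l x t' h3
termination_by d v
decreasing_by exact hd v hv


/-- Strict ancestor monotonicity from condition (a). -/
theorem anc_lt {q : Fin (N + 1) → Fin (N + 1)} (ha : ∀ i, i ≠ 0 → q (par i) < q i)
    (u v : Fin (N + 1)) (t : List (Fin (N + 1)))
    (h : path par d hd v = path par d hd u ++ t) (ht : t ≠ []) : q u < q v := by
  by_cases hv : v = 0
  · subst hv
    rw [path_zero] at h
    have hlen := congrArg List.length h
    have h1 : (path par d hd u).length ≠ 0 := by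
      simpa using path_ne_nil hd u
    have h2 : t.length ≠ 0 := by simpa using ht
    simp [List.length_append] at hlen
    omega
  · rw [path_ne hd hv] at h
    rcases List.eq_nil_or_concat t with rfl | ⟨t', z, rfl⟩
    · exact absurd rfl ht
    · have h' : path par d hd (par v) ++ [v] = (path par d hd u ++ t') ++ [z] := by
        simpa using h
      obtain ⟨h3, h4⟩ := List.append_inj' h' rfl
      rcases List.eq_nil_or_concat t' with rfl | ⟨t'', w, rfl⟩
      · have : u = par v := path_inj hd (by simpa using h3.symm)
        rw [this]
        exact ha v hv
      · have ih := anc_lt ha u (par v) _ h3 (by simp)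
        exact ih.trans (ha v hv)
termination_by d v
decreasing_by exact hd v hv

theorem anc_le {q : Fin (N + 1) → Fin (N + 1)} (ha : ∀ i, i ≠ 0 → q (par i) < q i)
    (u v : Fin (N + 1)) (t : List (Fin (N + 1)))
    (h : path par d hd v = path par d hd u ++ t) : q u ≤ q v := by
  rcases eq_or_ne t [] with rfl | ht
  · have : u = v := path_inj hd (by simpa using h.symm)
    exact this ▸ le_refl _
  · exact (anc_lt hd ha u v t h ht).le

/-- Key claim using the non-crossing condition: any descendant of `x` comes before a
sibling `y` of `x` that comes after `x`. -/
theorem desc_claim {q : Fin (N + 1) → Fin (N + 1)} (hqinj : Function.Injective q)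
    (ha : ∀ i, i ≠ 0 → q (par i) < q i)
    (hc : ¬ ∃ i j : Fin (N + 1), i ≠ 0 ∧ j ≠ 0 ∧
        q (par i) < q (par j) ∧ q (par j) < q i ∧ q i < q j)
    (x y : Fin (N + 1)) (hx : x ≠ 0) (hy : y ≠ 0) (hxy : par x = par y)
    (hqxy : q x < q y) (u : Fin (N + 1)) (t : List (Fin (N + 1)))
    (h : path par d hd u = path par d hd x ++ t) : q u < q y := by
  rcases eq_or_ne t [] with rfl | ht
  · have : u = x := path_inj hd (by simpa using h)
    exact this ▸ hqxy
  · have hu : u ≠ 0 := by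
      rintro rfl
      rw [path_zero] at h
      have hlen := congrArg List.length h
      have h1 : (path par d hd x).length ≠ 0 := by simpa using path_ne_nil hd x
      have h2 : t.length ≠ 0 := by simpa using ht
      simp [List.length_append] at hlen
      omega
    rw [path_ne hd hu] at h
    rcases List.eq_nil_or_concat t with rfl | ⟨t', z, rfl⟩
    · exact absurd rfl ht
    · have h' : path par d hd (par u) ++ [u] = (path par d hd x ++ t') ++ [z] := by
        simpa using h
      obtain ⟨h3, h4⟩ := List.append_inj' h' rfl
      have ih : q (par u) < q y :=
        desc_claim hqinj ha hc x y hx hy hxy hqxy (par u) t' h3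
      have hne : u ≠ y := by
        rintro rfl
        have e1 : path par d hd u = path par d hd (par u) ++ [u] := path_ne hd hu
        have e2 : path par d hd x = path par d hd (par x) ++ [x] := path_ne hd hx
        have e3 : path par d hd (par u) = path par d hd (par x) := by rw [hxy]
        have hlen := congrArg List.length h3
        have hlen2 := congrArg List.length (e3.symm.trans (h3.trans (congrArg (· ++ t') e2)))
        simp [List.length_append] at hlen2
      rcases lt_or_gt_of_ne (fun e => hne (hqinj e)) with h5 | h5
      · exact h5
      · exfalso
        apply hc
        refine ⟨y, u, hy, hu, ?_, ih, h5⟩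
        have e2 : path par d hd x = path par d hd (par x) ++ [x] := path_ne hd hx
        have : path par d hd (par u) = path par d hd (par y) ++ (x :: t') := by
          rw [h3, e2, hxy]; simp
        exact anc_lt hd ha (par y) (par u) _ this (by simp)
termination_by d u
decreasing_by exact hd u hu


/-- Any valid labelling is monotone for the path-lex order. -/
theorem mono_of_valid {q : Fin (N + 1) → Fin (N + 1)} (hqinj : Function.Injective q)
    (ha : ∀ i, i ≠ 0 → q (par i) < q i)
    (hb : ∀ i j : Fin (N + 1), i ≠ 0 → j ≠ 0 → par i = par j → i < j → q j < q i)
    (hc : ¬ ∃ i j : Fin (N + 1), i ≠ 0 ∧ j ≠ 0 ∧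
        q (par i) < q (par j) ∧ q (par j) < q i ∧ q i < q j)
    (u v : Fin (N + 1))
    (h : List.Lex (· > ·) (path par d hd u) (path par d hd v)) : q u < q v := by
  rcases lex_decomp h with ⟨t, ht, hm⟩ | ⟨pre, x, s, y, t, hu', hv', hr⟩
  · exact anc_lt hd ha u v t hm ht
  · have px : path par d hd x = pre ++ [x] := path_prefix hd u pre x s hu'
    have py : path par d hd y = pre ++ [y] := path_prefix hd v pre y t hv'
    have hpre : pre ≠ [] := by
      rintro rfl
      have h1 := path_head? hd u
      rw [hu'] at h1
      have h2 := path_head? hd v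
      rw [hv'] at h2
      simp at h1 h2
      rw [h1, h2] at hr
      exact lt_irrefl _ hr
    have hx0 : x ≠ 0 := by
      rintro rfl
      rw [path_zero] at px
      exact hpre (List.append_inj' (by simpa using px.symm : pre ++ [(0 : Fin (N+1))] = [] ++ [0]) rfl).1
    have hy0 : y ≠ 0 := by
      rintro rfl
      rw [path_zero] at py
      exact hpre (List.append_inj' (by simpa using py.symm : pre ++ [(0 : Fin (N+1))] = [] ++ [0]) rfl).1
    have hpx : path par d hd (par x) = pre := by
      rw [path_ne hd hx0] at px
      exact (List.append_inj' px rfl).1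
    have hpy : path par d hd (par y) = pre := by
      rw [path_ne hd hy0] at py
      exact (List.append_inj' py rfl).1
    have hparxy : par x = par y := path_inj hd (hpx.trans hpy.symm)
    have hqxy : q x < q y := hb y x hy0 hx0 hparxy.symm hr
    have h1 : q u < q y := by
      refine desc_claim hd hqinj ha hc x y hx0 hy0 hparxy hqxy u s ?_
      rw [hu', px]; simp
    have h2 : q y ≤ q v := by
      refine anc_le hd ha y v t ?_
      rw [hv', py]; simp
    exact lt_of_lt_of_le h1 h2

theorem lex_a {i : Fin (N + 1)} (hi : i ≠ 0) :
    List.Lex (· > ·) (path par d hd (par i)) (path par d hd i) := by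
  rw [path_ne hd hi]
  have : List.Lex (· > · : Fin (N + 1) → Fin (N + 1) → Prop)
      (path par d hd (par i) ++ []) (path par d hd (par i) ++ [i]) :=
    List.Lex.append_left _ List.Lex.nil _
  simpa using this

theorem lex_b {i j : Fin (N + 1)} (hi : i ≠ 0) (hj : j ≠ 0) (hij : par i = par j)
    (hlt : i < j) :
    List.Lex (· > ·) (path par d hd j) (path par d hd i) := by
  rw [path_ne hd hi, path_ne hd hj, hij]
  exact List.Lex.append_left _ (List.Lex.rel (r := (· > ·)) hlt) _

theorem lex_c {i j : Fin (N + 1)} (hi : i ≠ 0) (hj : j ≠ 0)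
    (h1 : List.Lex (· > ·) (path par d hd (par i)) (path par d hd (par j)))
    (h2 : List.Lex (· > ·) (path par d hd (par j)) (path par d hd i))
    (h3 : List.Lex (· > ·) (path par d hd i) (path par d hd j)) : False := by
  have hirr : ∀ a : Fin (N + 1), ¬ a > a := fun a => lt_irrefl a
  have hasym : ∀ a b : Fin (N + 1), a > b → ¬ b > a := fun a b h h' =>
    lt_irrefl a (h'.trans h)
  rw [path_ne hd hi] at h2 h3
  rw [path_ne hd hj] at h3
  obtain ⟨t, ht, hm⟩ := lex_sandwich hirr hasym h1 h2
  cases t with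
  | nil => exact absurd rfl ht
  | cons c rest =>
    rw [hm] at h2 h3
    have h2' : List.Lex (· > ·) (path par d hd (par i) ++ c :: rest)
        (path par d hd (par i) ++ i :: []) := h2
    rcases lex_middle hirr _ h2' with hci | ⟨rfl, h'⟩
    · -- hci : c > i
      have h3' : List.Lex (· > ·) (path par d hd (par i) ++ i :: [])
          (path par d hd (par i) ++ c :: (rest ++ [j])) := by
        simpa using h3
      rcases lex_middle hirr _ h3' with hic | ⟨rfl, h'⟩
      · exact hasym _ _ hci hic
      · exact hirr _ hci
    · cases h'

end Stmt7Aux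



/-- for a tree `T` on `{0,1,…,n}` rooted at `0`, with parent function `par`
(the parent of `i ≠ 0` is the neighbor of `i` on the path towards `0`, i.e. the unique
neighbor of `i` strictly closer to `0`), there is a unique bijection
`p : {0,…,n} → {0,…,n}` such that (a) `p(par i) < p(i)` for every `i ≠ 0`;
(b) siblings `i < j` satisfy `p(i) > p(j)`; and (c) the induced arc diagram is
non-crossing, i.e. there is no pair `i, j ≠ 0` with
`p(par i) < p(par j) < p(i) < p(j)`. -/
theorem stmt7 (n : ℕ) (hn : 1 ≤ n) (T : SimpleGraph (Fin (n + 1))) (hT : T.IsTree)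
    (par : Fin (n + 1) → Fin (n + 1))
    (hpar : ∀ i : Fin (n + 1), i ≠ 0 → T.Adj i (par i) ∧ T.dist (par i) 0 < T.dist i 0) :
    ∃! p : Fin (n + 1) ≃ Fin (n + 1),
      (∀ i : Fin (n + 1), i ≠ 0 → p (par i) < p i) ∧
      (∀ i j : Fin (n + 1), i ≠ 0 → j ≠ 0 → par i = par j → i < j → p j < p i) ∧
      ¬ ∃ i j : Fin (n + 1), i ≠ 0 ∧ j ≠ 0 ∧
        p (par i) < p (par j) ∧ p (par j) < p i ∧ p i < p j := by
  classical
  open Stmt7Aux in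
  have hd : ∀ i : Fin (n + 1), i ≠ 0 → (fun i => T.dist i 0) (par i) < (fun i => T.dist i 0) i :=
    fun i hi => (hpar i hi).2
  set K : Fin (n + 1) → List (Fin (n + 1)) := Stmt7Aux.path par (fun i => T.dist i 0) hd with hK
  have htrans : ∀ {a b c : List (Fin (n + 1))},
      List.Lex (· > ·) a b → List.Lex (· > ·) b c → List.Lex (· > ·) a c :=
    fun h1 h2 => Stmt7Aux.lex_trans (r := ((· > ·) : Fin (n+1) → Fin (n+1) → Prop)) (fun a b c h h' => lt_trans h' h) h1 h2
  have hirr : ∀ l : List (Fin (n + 1)), ¬ List.Lex (· > ·) l l := fun l h => asymm h h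
  have htri : ∀ u v : Fin (n + 1),
      List.Lex (· > ·) (K u) (K v) ∨ u = v ∨ List.Lex (· > ·) (K v) (K u) := by
    intro u v
    rcases trichotomous_of (List.Lex (· > ·)) (K u) (K v) with h | h | h
    · exact Or.inl h
    · exact Or.inr (Or.inl (Stmt7Aux.path_inj hd h))
    · exact Or.inr (Or.inr h)
  set pv : Fin (n + 1) → ℕ :=
    fun v => (Finset.univ.filter fun u => List.Lex (· > ·) (K u) (K v)).card with hpv
  have hstrict : ∀ u v : Fin (n + 1), List.Lex (· > ·) (K u) (K v) → pv u < pv v := by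
    intro u v h
    apply Finset.card_lt_card
    rw [Finset.ssubset_iff_of_subset]
    · exact ⟨u, by simpa using h, by simpa using hirr (K u)⟩
    · intro w hw
      simp only [Finset.mem_filter, Finset.mem_univ, true_and] at hw ⊢
      exact htrans hw h
  have hbound : ∀ v : Fin (n + 1), pv v < n + 1 := by
    intro v
    have hsub : (Finset.univ.filter fun u => List.Lex (· > ·) (K u) (K v)) ⊆
        Finset.univ.erase v := by
      intro w hw
      simp only [Finset.mem_filter, Finset.mem_univ, true_and] at hw
      refine Finset.mem_erase.mpr ⟨?_, Finset.mem_univ w⟩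
      rintro rfl
      exact hirr _ hw
    have := Finset.card_le_card hsub
    rw [Finset.card_erase_of_mem (Finset.mem_univ v), Finset.card_univ, Fintype.card_fin] at this
    simp only [hpv]
    omega
  set P : Fin (n + 1) → Fin (n + 1) := fun v => ⟨pv v, hbound v⟩ with hP
  have hPinj : Function.Injective P := by
    intro u v h
    have hval : pv u = pv v := by simpa [hP, Fin.mk.injEq] using h
    rcases htri u v with h' | h' | h'
    · exact absurd hval (Nat.ne_of_lt (hstrict u v h'))
    · exact h'
    · exact absurd hval.symm (Nat.ne_of_lt (hstrict v u h'))
  set p : Fin (n + 1) ≃ Fin (n + 1) :=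
    Equiv.ofBijective P (Finite.injective_iff_bijective.mp hPinj) with hpdef
  have hp : ∀ u v : Fin (n + 1), p u < p v ↔ List.Lex (· > ·) (K u) (K v) := by
    intro u v
    have hcoe : ∀ w : Fin (n + 1), p w = P w := fun w => rfl
    constructor
    · intro h
      rcases htri u v with h' | h' | h'
      · exact h'
      · subst h'; exact absurd h (lt_irrefl _)
      · have := hstrict v u h'
        rw [hcoe, hcoe] at h
        exact absurd (Fin.mk_lt_mk.mp h) (by omega)
    · intro h
      rw [hcoe, hcoe]
      exact Fin.mk_lt_mk.mpr (hstrict u v h)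
  refine ⟨p, ⟨?_, ?_, ?_⟩, ?_⟩
  · intro i hi
    exact (hp _ _).mpr (Stmt7Aux.lex_a hd hi)
  · intro i j hi hj hij hlt
    exact (hp _ _).mpr (Stmt7Aux.lex_b hd hi hj hij hlt)
  · rintro ⟨i, j, hi, hj, h1, h2, h3⟩
    exact Stmt7Aux.lex_c hd hi hj ((hp _ _).mp h1) ((hp _ _).mp h2) ((hp _ _).mp h3)
  · rintro q ⟨ha, hb, hc⟩
    have hmono : ∀ u v : Fin (n + 1), List.Lex (· > ·) (K u) (K v) → q u < q v :=
      fun u v h => Stmt7Aux.mono_of_valid hd q.injective ha hb hc u v h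
    apply Equiv.ext
    intro v
    have hset : (Finset.univ.filter fun u => List.Lex (· > ·) (K u) (K v)) =
        Finset.univ.filter fun u => q u < q v := by
      ext w
      simp only [Finset.mem_filter, Finset.mem_univ, true_and]
      constructor
      · exact hmono w v
      · intro hw
        rcases htri w v with h' | h' | h'
        · exact h'
        · subst h'; exact absurd hw (lt_irrefl _)
        · exact absurd hw (asymm (hmono v w h'))
    have himg : (Finset.univ.filter fun u => q u < q v).image q = Finset.Iio (q v) := by
      ext k
      simp only [Finset.mem_image, Finset.mem_filter, Finset.mem_univ, true_and,
        Finset.mem_Iio]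
      constructor
      · rintro ⟨w, hw, rfl⟩; exact hw
      · intro hk; exact ⟨q.symm k, by simpa using hk, by simp⟩
    have hcard : pv v = (q v : ℕ) := by
      rw [hpv]
      calc (Finset.univ.filter fun u => List.Lex (· > ·) (K u) (K v)).card
          = (Finset.univ.filter fun u => q u < q v).card := by rw [hset]
        _ = ((Finset.univ.filter fun u => q u < q v).image q).card :=
            (Finset.card_image_of_injective _ q.injective).symm
        _ = (Finset.Iio (q v)).card := by rw [himg]
        _ = (q v : ℕ) := by simp
    exact Fin.ext (hcard.symm.trans rfl)
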